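/- Let d and n be nonnegative integers, let (T_i)_{i<d} be a d-tuple of pairwise disjoint chains (linearly ordered sets), let P be a (nonempty) subposet of the product poset ∏_{i<d} T_i, and let (M_j)_{j<n} be an n-tuple of pairwise disjoint subsets of ⋃_{i<d} T_i such that: for every comparable pair of elements p ≤ p' in P and every j < n, there exists i < d such that the i-th coordinates of p and p' are equal and their common value lies in M_j. Then for any n-tuple of chains (C_j)_{j<n}, dim(P × ∏_{j<n} C_j) ≤ d. -/

import Mathlib

universe u

/-- The order dimension of a poset: the least cardinal `κ` such that the partial
order is the intersection of `κ` linear orderings (each extending it). -/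
noncomputable def orderDim (α : Type u) [PartialOrder α] : Cardinal.{u} :=
  sInf {κ : Cardinal.{u} | ∃ (ι : Type u) (r : ι → α → α → Prop),
    (∀ i, IsLinearOrder α (r i)) ∧
    (∀ x y : α, x ≤ y ↔ ∀ i, r i x y) ∧
    Cardinal.mk ι = κ}

section aux

variable {n : ℕ} {γ : Fin n → Type} [∀ j, LinearOrder (γ j)] {β : Type}

/-- Auxiliary tie-breaking relation: compare at coordinate `j` (if `o = some j`),
then by `σ`. -/
def innerRel (σ : (β × ∀ j, γ j) → (β × ∀ j, γ j) → Prop) (o : Option (Fin n))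
    (x y : β × ∀ j, γ j) : Prop :=
  o.elim (σ x y) fun j => x.2 j < y.2 j ∨ (x.2 j = y.2 j ∧ σ x y)

variable {σ : (β × ∀ j, γ j) → (β × ∀ j, γ j) → Prop}

lemma innerRel_refl (hσ : ∀ x, σ x x) (o : Option (Fin n)) (x : β × ∀ j, γ j) :
    innerRel σ o x x := by
  cases o with
  | none => exact hσ x
  | some j => exact Or.inr ⟨rfl, hσ x⟩

lemma innerRel_trans (hσ : ∀ x y z, σ x y → σ y z → σ x z) (o : Option (Fin n))
    (x y z : β × ∀ j, γ j) (h1 : innerRel σ o x y) (h2 : innerRel σ o y z) :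
    innerRel σ o x z := by
  cases o with
  | none => exact hσ _ _ _ h1 h2
  | some j =>
    rcases h1 with h1 | ⟨e1, s1⟩ <;> rcases h2 with h2 | ⟨e2, s2⟩
    · exact Or.inl (h1.trans h2)
    · exact Or.inl (lt_of_lt_of_le h1 (le_of_eq e2))
    · exact Or.inl (lt_of_le_of_lt (le_of_eq e1) h2)
    · exact Or.inr ⟨e1.trans e2, hσ _ _ _ s1 s2⟩

lemma innerRel_antisymm (hσ : ∀ x y, σ x y → σ y x → x = y) (o : Option (Fin n))
    (x y : β × ∀ j, γ j) (h1 : innerRel σ o x y) (h2 : innerRel σ o y x) :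
    x = y := by
  cases o with
  | none => exact hσ _ _ h1 h2
  | some j =>
    rcases h1 with h1 | ⟨e1, s1⟩ <;> rcases h2 with h2 | ⟨e2, s2⟩
    · exact absurd (h1.trans h2) (lt_irrefl _)
    · exact absurd e2.symm h1.ne
    · exact absurd e1.symm h2.ne
    · exact hσ _ _ s1 s2

lemma innerRel_total (hσ : ∀ x y, σ x y ∨ σ y x) (o : Option (Fin n))
    (x y : β × ∀ j, γ j) : innerRel σ o x y ∨ innerRel σ o y x := by
  cases o with
  | none => exact hσ x y
  | some j =>
    rcases lt_trichotomy (x.2 j) (y.2 j) with h | h | h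
    · exact Or.inl (Or.inl h)
    · rcases hσ x y with hs | hs
      · exact Or.inl (Or.inr ⟨h, hs⟩)
      · exact Or.inr (Or.inr ⟨h.symm, hs⟩)
    · exact Or.inr (Or.inl h)

lemma innerRel_of_le (hxy : σ x y) (h : ∀ j, x.2 j ≤ y.2 j) (o : Option (Fin n)) :
    innerRel σ o x y := by
  cases o with
  | none => exact hxy
  | some j =>
    rcases lt_or_eq_of_le (h j) with h' | h'
    · exact Or.inl h'
    · exact Or.inr ⟨h', hxy⟩

lemma innerRel_le (hσ : ∀ x y, σ x y → σ y x → x = y) {j : Fin n}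
    (h : innerRel σ (some j) x y) : x.2 j ≤ y.2 j := by
  rcases h with h | ⟨e, _⟩
  · exact h.le
  · exact e.le

end aux

theorem stmt0 (d n : ℕ) (T : Fin d → Type) [∀ i, LinearOrder (T i)]
    [∀ i, Nonempty (T i)]
    (P : Set (∀ i, T i)) (hP : P.Nonempty)
    (M : Fin n → Set (Σ i, T i))
    (hMdisj : Pairwise (Function.onFun Disjoint M))
    (hcond : ∀ p ∈ P, ∀ p' ∈ P, p ≤ p' →
      ∀ j : Fin n, ∃ i : Fin d, p i = p' i ∧ (⟨i, p i⟩ : Σ i, T i) ∈ M j)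
    (C : Fin n → Type) [∀ j, LinearOrder (C j)] [∀ j, Nonempty (C j)] :
    orderDim (↥P × ∀ j, C j) ≤ d := by
  classical
  obtain ⟨σ, σlin, σext⟩ :=
    extend_partialOrder ((· ≤ ·) : (↥P × ∀ j, C j) → (↥P × ∀ j, C j) → Prop)
  have σrefl : ∀ x, σ x x := σlin.toIsPartialOrder.toIsPreorder.toRefl.refl
  have σtrans : ∀ x y z, σ x y → σ y z → σ x z :=
    σlin.toIsPartialOrder.toIsPreorder.toIsTrans.trans
  have σanti : ∀ x y, σ x y → σ y x → x = y :=
    σlin.toIsPartialOrder.toAntisymm.antisymm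
  have σtotal : ∀ x y, σ x y ∨ σ y x := σlin.toTotal.total
  set sel : ∀ i : Fin d, T i → Option (Fin n) :=
    fun i t => if h : ∃ j, (⟨i, t⟩ : Σ i, T i) ∈ M j then some h.choose else none
    with hseldef
  have hsel : ∀ (i : Fin d) (t : T i) (j : Fin n),
      (⟨i, t⟩ : Σ i, T i) ∈ M j → sel i t = some j := by
    intro i t j hj
    have hex : ∃ j', (⟨i, t⟩ : Σ i, T i) ∈ M j' := ⟨j, hj⟩
    rw [hseldef]
    simp only [dif_pos hex]
    congr 1
    by_contra hne
    exact Set.disjoint_left.mp (hMdisj hne) hex.choose_spec hj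
  set r : Fin d → (↥P × ∀ j, C j) → (↥P × ∀ j, C j) → Prop :=
    fun i x y => x.1.1 i < y.1.1 i ∨ (x.1.1 i = y.1.1 i ∧
      innerRel σ (sel i (x.1.1 i)) x y) with hrdef
  have hlin : ∀ i, IsLinearOrder _ (r i) := by
    intro i
    have hr : ∀ x, r i x x := by
      intro x
      exact Or.inr ⟨rfl, innerRel_refl σrefl _ x⟩
    have ht : ∀ x y z, r i x y → r i y z → r i x z := by
      intro x y z hxy hyz
      rcases hxy with h1 | ⟨e1, i1⟩ <;> rcases hyz with h2 | ⟨e2, i2⟩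
      · exact Or.inl (h1.trans h2)
      · exact Or.inl (lt_of_lt_of_le h1 (le_of_eq e2))
      · exact Or.inl (lt_of_le_of_lt (le_of_eq e1) h2)
      · rw [← e1] at i2
        exact Or.inr ⟨e1.trans e2, innerRel_trans σtrans _ _ _ _ i1 i2⟩
    have ha : ∀ x y, r i x y → r i y x → x = y := by
      intro x y hxy hyx
      rcases hxy with h1 | ⟨e1, i1⟩ <;> rcases hyx with h2 | ⟨e2, i2⟩
      · exact absurd (h1.trans h2) (lt_irrefl _)
      · exact absurd e2.symm h1.ne
      · exact absurd e1.symm h2.ne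
      · rw [← e1] at i2
        exact innerRel_antisymm σanti _ _ _ i1 i2
    have hto : ∀ x y, r i x y ∨ r i y x := by
      intro x y
      rcases lt_trichotomy (x.1.1 i) (y.1.1 i) with h | h | h
      · exact Or.inl (Or.inl h)
      · rcases innerRel_total σtotal (sel i (x.1.1 i)) x y with hi | hi
        · exact Or.inl (Or.inr ⟨h, hi⟩)
        · refine Or.inr (Or.inr ⟨h.symm, ?_⟩)
          rw [← h]
          exact hi
      · exact Or.inr (Or.inl h)
    haveI : IsRefl _ (r i) := ⟨hr⟩
    haveI : IsTrans _ (r i) := ⟨ht⟩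
    haveI : IsAntisymm _ (r i) := ⟨ha⟩
    haveI : IsTotal _ (r i) := ⟨hto⟩
    haveI : IsPreorder _ (r i) := {}
    haveI : IsPartialOrder _ (r i) := {}
    exact {}
  have hiff : ∀ x y : ↥P × ∀ j, C j, x ≤ y ↔ ∀ i, r i x y := by
    intro x y
    constructor
    · intro h i
      have hp : ∀ k, x.1.1 k ≤ y.1.1 k := fun k => h.1 k
      rcases lt_or_eq_of_le (hp i) with h' | h'
      · exact Or.inl h'
      · exact Or.inr ⟨h', innerRel_of_le (σext _ _ h) (fun j => h.2 j) _⟩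
    · intro h
      have hp : (x.1 : ∀ i, T i) ≤ y.1 := by
        intro k
        rcases h k with h' | ⟨e, _⟩
        · exact h'.le
        · exact e.le
      constructor
      · exact hp
      · intro j
        obtain ⟨i, hi_eq, hi_mem⟩ := hcond x.1.1 x.1.2 y.1.1 y.1.2 hp j
        rcases h i with h' | ⟨e, hi⟩
        · exact absurd hi_eq h'.ne
        · rw [hsel i _ j hi_mem] at hi
          exact innerRel_le σanti hi
  have hmem : (d : Cardinal) ∈ {κ : Cardinal | ∃ (ι : Type) (r : ι → (↥P × ∀ j, C j) → (↥P × ∀ j, C j) → Prop),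
      (∀ i, IsLinearOrder _ (r i)) ∧ (∀ x y, x ≤ y ↔ ∀ i, r i x y) ∧ Cardinal.mk ι = κ} :=
    ⟨Fin d, r, hlin, hiff, by simp⟩
  exact csInf_le' hmem
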